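/- arXiv:1111.6663 — 3 statements merged into one kernel-verified Lean document; each statement's English description precedes it below -/
import Mathlib

section
/- For every integer d ≥ 2 and every α ∈ (0, π/2], the Chen–Wang bound improves the Bérard–Besson–Gallot bound: (4 d α²)/( (2α)² (1 − cos^d α) ) ≥ d·(∫₀^{π/2} cos^{d-1} t dt / ∫₀^{α} cos^{d-1} t dt)^{2/d}, i.e. d/(1 − cos^d α) ≥ d·(∫₀^{π/2} cos^{d-1} t dt / ∫₀^{α} cos^{d-1} t dt)^{2/d}. -/
open Real Set intervalIntegral

private lemma cospow_cont (d : ℕ) : Continuous fun t : ℝ => Real.cos t ^ (d - 1) :=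
  Real.continuous_cos.pow _

private lemma key (d : ℕ) (hd : 2 ≤ d) (α : ℝ) (hα : α ∈ Set.Ioc 0 (π / 2)) :
    (∫ t in (0:ℝ)..(π / 2), Real.cos t ^ (d - 1)) * (1 - Real.cos α ^ d) ^ ((d : ℝ) / 2) ≤
      ∫ t in (0:ℝ)..α, Real.cos t ^ (d - 1) := by
  obtain ⟨hα0, hα2⟩ := hα
  set K : ℝ := ∫ t in (0:ℝ)..(π / 2), Real.cos t ^ (d - 1) with hK
  have hπ : (0:ℝ) < π / 2 := by positivity
  have hK0 : 0 ≤ K := by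
    apply intervalIntegral.integral_nonneg hπ.le
    intro u hu
    exact pow_nonneg (Real.cos_nonneg_of_mem_Icc ⟨by linarith [hu.1], hu.2⟩) _
  have hc1 : (1:ℝ) ≤ (d : ℝ) / 2 := by
    have : (2:ℝ) ≤ (d : ℝ) := by exact_mod_cast hd
    linarith
  set f : ℝ → ℝ := fun x =>
    (∫ t in (0:ℝ)..x, Real.cos t ^ (d - 1)) - K * (1 - Real.cos x ^ d) ^ ((d : ℝ) / 2) with hf
  set D : ℝ → ℝ := fun x =>
    Real.cos x ^ (d - 1) *
      (1 - K * ((d : ℝ) * ((d : ℝ) / 2)) * (1 - Real.cos x ^ d) ^ ((d : ℝ) / 2 - 1) * Real.sin x)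
    with hD
  have hder : ∀ x : ℝ, HasDerivAt f (D x) x := by
    intro x
    have h1 : HasDerivAt (fun u => ∫ t in (0:ℝ)..u, Real.cos t ^ (d - 1))
        (Real.cos x ^ (d - 1)) x :=
      intervalIntegral.integral_hasDerivAt_right
        ((cospow_cont d).intervalIntegrable _ _)
        ((cospow_cont d).stronglyMeasurableAtFilter _ _)
        (cospow_cont d).continuousAt
    have h2 : HasDerivAt (fun u => Real.cos u ^ d)
        ((d : ℝ) * Real.cos x ^ (d - 1) * (-Real.sin x)) x :=
      (Real.hasDerivAt_cos x).pow d
    have h3 : HasDerivAt (fun u => 1 - Real.cos u ^ d)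
        ((d : ℝ) * Real.cos x ^ (d - 1) * Real.sin x) x := by
      have := h2.const_sub 1
      exact this.congr_deriv (by ring)
    have h4 := h3.rpow_const (p := (d : ℝ) / 2) (Or.inr hc1)
    have h5 := h1.sub (h4.const_mul K)
    exact h5.congr_deriv (by simp only [hD]; ring)
  have hdiff : Differentiable ℝ f := fun x => (hder x).differentiableAt
  have hf0 : f 0 = 0 := by
    have hne : ((d : ℝ) / 2) ≠ 0 := by linarith
    simp [hf, Real.cos_zero, one_pow, sub_self, Real.zero_rpow hne]
  have hfπ : f (π / 2) = 0 := by
    have hdne : d ≠ 0 := by omega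
    simp [hf, hK, Real.cos_pi_div_two, zero_pow hdne, Real.one_rpow]
  -- monotonicity of the bracket's varying part
  have hM : ∀ x y : ℝ, x ∈ Icc (0:ℝ) (π/2) → y ∈ Icc (0:ℝ) (π/2) → x ≤ y →
      (1 - Real.cos x ^ d) ^ ((d : ℝ) / 2 - 1) * Real.sin x ≤
        (1 - Real.cos y ^ d) ^ ((d : ℝ) / 2 - 1) * Real.sin y := by
    intro x y hx hy hxy
    have hcosy : 0 ≤ Real.cos y := Real.cos_nonneg_of_mem_Icc ⟨by linarith [hy.1], hy.2⟩
    have hcos : Real.cos y ≤ Real.cos x := by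
      rcases eq_or_lt_of_le hxy with rfl | h
      · exact le_refl _
      · exact (Real.strictAntiOn_cos ⟨hx.1, by linarith [hx.2, Real.pi_pos]⟩
          ⟨hy.1, by linarith [hy.2, Real.pi_pos]⟩ h).le
    have hS : 1 - Real.cos x ^ d ≤ 1 - Real.cos y ^ d := by
      have := pow_le_pow_left₀ hcosy hcos d
      linarith
    have hSx0 : 0 ≤ 1 - Real.cos x ^ d := by
      have h1 : Real.cos x ≤ 1 := Real.cos_le_one x
      have h0 : 0 ≤ Real.cos x := Real.cos_nonneg_of_mem_Icc ⟨by linarith [hx.1], hx.2⟩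
      have := pow_le_one₀ h0 h1 (n := d)
      linarith
    have hrp : (1 - Real.cos x ^ d) ^ ((d : ℝ) / 2 - 1) ≤
        (1 - Real.cos y ^ d) ^ ((d : ℝ) / 2 - 1) :=
      Real.rpow_le_rpow hSx0 hS (by linarith)
    have hsin : Real.sin x ≤ Real.sin y :=
      Real.sin_le_sin_of_le_of_le_pi_div_two (by linarith [hx.1, Real.pi_pos]) hy.2 hxy
    have hsinx : 0 ≤ Real.sin x := Real.sin_nonneg_of_nonneg_of_le_pi hx.1 (by linarith [hx.2, Real.pi_pos])
    have hrpy : 0 ≤ (1 - Real.cos y ^ d) ^ ((d : ℝ) / 2 - 1) :=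
      Real.rpow_nonneg (by linarith) _
    exact mul_le_mul hrp hsin hsinx hrpy
  -- f α ≥ 0 by case analysis on the sign of the bracket at α
  have hfα : 0 ≤ f α := by
    by_cases hg : 0 ≤ 1 - K * ((d : ℝ) * ((d : ℝ) / 2)) *
        ((1 - Real.cos α ^ d) ^ ((d : ℝ) / 2 - 1) * Real.sin α)
    · -- f monotone on [0, α]
      have hmono : MonotoneOn f (Icc 0 α) := by
        apply monotoneOn_of_deriv_nonneg (convex_Icc _ _) hdiff.continuous.continuousOn
          hdiff.differentiableOn
        intro x hx
        rw [interior_Icc] at hx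
        rw [(hder x).deriv]
        have hxI : x ∈ Icc (0:ℝ) (π/2) := ⟨hx.1.le, by linarith [hx.2]⟩
        have hcosnn : 0 ≤ Real.cos x ^ (d - 1) :=
          pow_nonneg (Real.cos_nonneg_of_mem_Icc ⟨by linarith [hxI.1], hxI.2⟩) _
        have hMx := hM x α hxI ⟨hα0.le, hα2⟩ hx.2.le
        have hKd : 0 ≤ K * ((d : ℝ) * ((d : ℝ) / 2)) := by positivity
        have : 0 ≤ 1 - K * ((d : ℝ) * ((d : ℝ) / 2)) *
            ((1 - Real.cos x ^ d) ^ ((d : ℝ) / 2 - 1) * Real.sin x) := by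
          nlinarith [mul_le_mul_of_nonneg_left hMx hKd]
        simp only [hD]
        nlinarith
      have := hmono (Set.left_mem_Icc.mpr hα0.le) (Set.right_mem_Icc.mpr hα0.le) hα0.le
      rw [hf0] at this
      exact this
    · -- f antitone on [α, π/2]
      push_neg at hg
      have hanti : AntitoneOn f (Icc α (π/2)) := by
        apply antitoneOn_of_deriv_nonpos (convex_Icc _ _) hdiff.continuous.continuousOn
          hdiff.differentiableOn
        intro x hx
        rw [interior_Icc] at hx
        rw [(hder x).deriv]
        have hxI : x ∈ Icc (0:ℝ) (π/2) := ⟨by linarith [hx.1], hx.2.le⟩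
        have hcosnn : 0 ≤ Real.cos x ^ (d - 1) :=
          pow_nonneg (Real.cos_nonneg_of_mem_Icc ⟨by linarith [hxI.1], hxI.2⟩) _
        have hMx := hM α x ⟨hα0.le, hα2⟩ hxI hx.1.le
        have hKd : 0 ≤ K * ((d : ℝ) * ((d : ℝ) / 2)) := by positivity
        have : 1 - K * ((d : ℝ) * ((d : ℝ) / 2)) *
            ((1 - Real.cos x ^ d) ^ ((d : ℝ) / 2 - 1) * Real.sin x) ≤ 0 := by
          nlinarith [mul_le_mul_of_nonneg_left hMx hKd]
        simp only [hD]
        nlinarith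
      have := hanti (Set.left_mem_Icc.mpr hα2) (Set.right_mem_Icc.mpr hα2) hα2
      rw [hfπ] at this
      exact this
  simpa [hf, sub_nonneg] using hfα

theorem stmt1 (d : ℕ) (hd : 2 ≤ d) (α : ℝ) (hα : α ∈ Set.Ioc 0 (π / 2)) :
    4 * d * α ^ 2 / ((2 * α) ^ 2 * (1 - Real.cos α ^ d)) ≥
      (d : ℝ) * ((∫ t in (0:ℝ)..(π / 2), Real.cos t ^ (d - 1)) /
        (∫ t in (0:ℝ)..α, Real.cos t ^ (d - 1))) ^ ((2 : ℝ) / d) := by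
  obtain ⟨hα0, hα2⟩ := hα
  have hπ : (0:ℝ) < π / 2 := by positivity
  set K : ℝ := ∫ t in (0:ℝ)..(π / 2), Real.cos t ^ (d - 1) with hK
  set I : ℝ := ∫ t in (0:ℝ)..α, Real.cos t ^ (d - 1) with hI
  have hIpos : 0 < I := by
    apply intervalIntegral.intervalIntegral_pos_of_pos_on
      ((cospow_cont d).intervalIntegrable _ _) _ hα0
    intro x hx
    exact pow_pos (Real.cos_pos_of_mem_Ioo ⟨by linarith [hx.1, Real.pi_pos], by linarith [hx.2]⟩) _
  have hK0 : 0 ≤ K := by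
    apply intervalIntegral.integral_nonneg hπ.le
    intro u hu
    exact pow_nonneg (Real.cos_nonneg_of_mem_Icc ⟨by linarith [hu.1], hu.2⟩) _
  -- 0 < S ≤ 1 where S = 1 - cos α ^ d
  have hcosα : 0 ≤ Real.cos α := Real.cos_nonneg_of_mem_Icc ⟨by linarith, hα2⟩
  have hcoslt : Real.cos α < 1 := by
    have := Real.strictAntiOn_cos ⟨le_refl (0:ℝ), Real.pi_pos.le⟩
      ⟨hα0.le, by linarith [Real.pi_pos]⟩ hα0
    simpa using this
  have hSpos : 0 < 1 - Real.cos α ^ d :=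
    sub_pos.mpr (pow_lt_one₀ hcosα hcoslt (by omega))
  set S : ℝ := 1 - Real.cos α ^ d with hS
  have hd0 : (0:ℝ) < d := by exact_mod_cast (by omega : 0 < d)
  have hkey : K * S ^ ((d : ℝ) / 2) ≤ I := key d hd α ⟨hα0, hα2⟩
  -- deduce (K / I) ^ (2/d) ≤ S⁻¹
  have hstep : K / I ≤ S ^ (-((d : ℝ) / 2)) := by
    rw [Real.rpow_neg hSpos.le, div_le_iff₀ hIpos, inv_mul_eq_div,
      le_div_iff₀ (Real.rpow_pos_of_pos hSpos _)]
    exact hkey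
  have hmain : (K / I) ^ ((2 : ℝ) / d) ≤ S⁻¹ := by
    have h1 : (K / I) ^ ((2 : ℝ) / d) ≤ (S ^ (-((d : ℝ) / 2))) ^ ((2 : ℝ) / d) :=
      Real.rpow_le_rpow (div_nonneg hK0 hIpos.le) hstep (by positivity)
    have h2 : (S ^ (-((d : ℝ) / 2))) ^ ((2 : ℝ) / d) = S⁻¹ := by
      rw [← Real.rpow_mul hSpos.le]
      have : -((d : ℝ) / 2) * ((2 : ℝ) / d) = -1 := by
        field_simp
      rw [this, Real.rpow_neg_one]
    rw [h2] at h1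
    exact h1
  -- conclude
  have hLHS : 4 * (d:ℝ) * α ^ 2 / ((2 * α) ^ 2 * S) = (d:ℝ) / S := by
    have hα0' : α ≠ 0 := ne_of_gt hα0
    field_simp
    ring
  rw [ge_iff_le, hLHS, div_eq_mul_inv]
  exact mul_le_mul_of_nonneg_left hmain hd0.le
end

section
/- On the region |K|D² ≤ 4, the refined Chen–Scacciatelli–Yao bound improves the Shi–Zhang bound: π²/D² + K/2 + (10 − π²)·K²D²/16 ≥ (π/D + KD/(4π))² whenever |K| D² ≤ 4. -/
open Real

theorem stmt5 (K D : ℝ) (hD : 0 < D) (h : |K| * D ^ 2 ≤ 4) :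
    π ^ 2 / D ^ 2 + K / 2 + (10 - π ^ 2) * K ^ 2 * D ^ 2 / 16 ≥
      (π / D + K * D / (4 * π)) ^ 2 := by
  have hπ := pi_gt_d6
  have hπ' := pi_lt_d6
  have hπ0 : (0:ℝ) < π := by linarith
  have hrhs : (π / D + K * D / (4 * π)) ^ 2
      = π ^ 2 / D ^ 2 + K / 2 + K ^ 2 * D ^ 2 / (16 * π ^ 2) := by
    field_simp
    ring
  rw [hrhs]
  have key : K ^ 2 * D ^ 2 / (16 * π ^ 2) ≤ (10 - π ^ 2) * K ^ 2 * D ^ 2 / 16 := by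
    rw [div_le_div_iff₀ (by positivity) (by norm_num)]
    have h1 : 1 ≤ (10 - π ^ 2) * π ^ 2 := by 
      have hl : (9.8696:ℝ) < π ^ 2 := by nlinarith
      have hu : π ^ 2 < 9.8697 := by nlinarith
      nlinarith [mul_pos (show (0:ℝ) < π^2 by positivity) (show (0:ℝ) < 10 - π^2 by nlinarith)]
    nlinarith [mul_nonneg (sq_nonneg K) (sq_nonneg D), h1]
  linarith
end

section
/- (Shi–Zhang identity, Lemma 2.1) Let ℓ > 0, F ∈ C[0,ℓ] ∩ C¹(0,ℓ) with F(0) = 0, and let f be a C³ solution of f'' + F f' = −λ f on [0,ℓ] with f(0) = 0 and f'(ℓ) = 0, with f' > 0 on [0,ℓ). Then for each s ∈ (0,1), the function g := (f')^{1/(2(1−s))} satisfies 4 s (1 − s) ∫₀^ℓ (g')² dr = ∫₀^ℓ (λ + s F') g² dr, and g'(0) = 0, g(ℓ) = 0. -/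
open Real Set MeasureTheory intervalIntegral

set_option maxHeartbeats 1000000 in
lemma aux (ℓ lam : ℝ) (hl : 0 < ℓ) (F f u v w : ℝ → ℝ) (s t : ℝ)
    (hs0 : 0 < s) (hs1 : s < 1) (ht : t = 1 / (2 * (1 - s)))
    (hFc : ContinuousOn F (Icc 0 ℓ)) (hF1 : ContDiffOn ℝ 1 F (Ioo 0 ℓ)) (hF0 : F 0 = 0)
    (hdf : ∀ x, HasDerivAt f (u x) x) (hdu : ∀ x, HasDerivAt u (v x) x)
    (hdv : ∀ x, HasDerivAt v (w x) x)
    (hvc : Continuous v) (hwc : Continuous w)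
    (hode : ∀ r ∈ Icc (0:ℝ) ℓ, v r + F r * u r = -lam * f r)
    (hf0 : f 0 = 0) (hfl : u ℓ = 0) (hf' : ∀ r ∈ Ico (0:ℝ) ℓ, 0 < u r)
    (g : ℝ → ℝ) (hg : g = fun r => u r ^ t) :
    4 * s * (1 - s) * (∫ r in (0:ℝ)..ℓ, (deriv g r) ^ 2)
        = (∫ r in (0:ℝ)..ℓ, (lam + s * deriv F r) * (g r) ^ 2) ∧
      deriv g 0 = 0 ∧ g ℓ = 0 := by
  have h1s : (0:ℝ) < 1 - s := by linarith
  have ht0 : 0 < t := by rw [ht]; positivity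
  have htkey : 2 * t * (1 - s) = 1 := by rw [ht]; field_simp
  have ht1 : 1 < 2 * t := by nlinarith
  have hdfd : Differentiable ℝ f := fun x => (hdf x).differentiableAt
  have hud : Differentiable ℝ u := fun x => (hdu x).differentiableAt
  have hfc : Continuous f := hdfd.continuous
  have huc : Continuous u := hud.continuous
  have hu0 : 0 < u 0 := hf' 0 ⟨le_rfl, hl⟩
  have hv0 : v 0 = 0 := by
    have h := hode 0 ⟨le_rfl, hl.le⟩
    rw [hF0, hf0] at h; simpa using h
  have hgl : g ℓ = 0 := by rw [hg]; simp [hfl, Real.zero_rpow ht0.ne']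
  have hderivg : ∀ r, u r ≠ 0 → HasDerivAt g (v r * t * u r ^ (t - 1)) r := by
    intro r hr
    rw [hg]
    exact (hdu r).rpow_const (Or.inl hr)
  have hdg0 : deriv g 0 = 0 := by
    rw [(hderivg 0 hu0.ne').deriv, hv0]; ring
  have unn : ∀ r ∈ Icc (0:ℝ) ℓ, 0 ≤ u r := by
    intro r hr
    rcases eq_or_lt_of_le hr.2 with h | h
    · rw [h, hfl]
    · exact (hf' r ⟨hr.1, h⟩).le
  have fmono : MonotoneOn f (Icc 0 ℓ) := by
    apply monotoneOn_of_deriv_nonneg (convex_Icc 0 ℓ) hfc.continuousOn hdfd.differentiableOn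
    intro x hx
    rw [interior_Icc] at hx
    rw [(hdf x).deriv]
    exact (hf' x ⟨hx.1.le, hx.2⟩).le
  have fnn : ∀ r ∈ Icc (0:ℝ) ℓ, 0 ≤ f r := fun r hr => by
    have := fmono ⟨le_rfl, hl.le⟩ hr hr.1
    rw [hf0] at this; exact this
  have hflpos : 0 < f ℓ := by
    have hsm : StrictMonoOn f (Icc 0 ℓ) := by
      apply strictMonoOn_of_deriv_pos (convex_Icc 0 ℓ) hfc.continuousOn
      intro x hx
      rw [interior_Icc] at hx
      rw [(hdf x).deriv]
      exact hf' x ⟨hx.1.le, hx.2⟩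
    have := hsm ⟨le_rfl, hl.le⟩ ⟨hl.le, le_rfl⟩ hl
    rw [hf0] at this; exact this
  -- lam > 0
  have hlam : 0 < lam := by
    by_contra hcon
    push_neg at hcon
    obtain ⟨Mx, _, hMx⟩ := isCompact_Icc.exists_isMaxOn (nonempty_Icc.mpr hl.le) hFc
    set M := F Mx with hM
    have hWmono : MonotoneOn (fun r => u r * Real.exp (M * r)) (Icc 0 ℓ) := by
      apply monotoneOn_of_deriv_nonneg (convex_Icc 0 ℓ)
      · exact (huc.mul (Real.continuous_exp.comp (continuous_const.mul continuous_id))).continuousOn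
      · apply Differentiable.differentiableOn
        exact hud.mul (Real.differentiable_exp.comp ((differentiable_const M).mul differentiable_id))
      · intro x hx
        rw [interior_Icc] at hx
        have hexpd : HasDerivAt (fun r => Real.exp (M * r)) (Real.exp (M * x) * M) x := by
          simpa using ((hasDerivAt_id x).const_mul M).exp
        have hW' : HasDerivAt (fun r => u r * Real.exp (M * r))
            (v x * Real.exp (M * x) + u x * (Real.exp (M * x) * M)) x :=
          (hdu x).mul hexpd
        rw [hW'.deriv]
        have hox := hode x ⟨hx.1.le, hx.2.le⟩
        have hun := unn x ⟨hx.1.le, hx.2.le⟩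
        have hfx := fnn x ⟨hx.1.le, hx.2.le⟩
        have hFx : F x ≤ M := hMx ⟨hx.1.le, hx.2.le⟩
        have hex := Real.exp_pos (M * x)
        have hvx : v x = -(lam * f x) - F x * u x := by
          have : -lam * f x = -(lam * f x) := by ring
          linarith [hox]
        rw [hvx]
        have hA : 0 ≤ (-lam) * f x + (M - F x) * u x :=
          add_nonneg (mul_nonneg (by linarith) hfx) (mul_nonneg (by linarith) hun)
        nlinarith [mul_nonneg hA hex.le]
    have hfin := hWmono ⟨le_rfl, hl.le⟩ ⟨hl.le, le_rfl⟩ hl.le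
    have hfin' : u 0 * Real.exp (M * 0) ≤ u ℓ * Real.exp (M * ℓ) := hfin
    rw [hfl, mul_zero, Real.exp_zero] at hfin'
    nlinarith [hfin']
  have hvl : v ℓ = -(lam * f ℓ) := by
    have h := hode ℓ ⟨hl.le, le_rfl⟩
    rw [hfl] at h
    have : -lam * f ℓ = -(lam * f ℓ) := by ring
    linarith
  set c := lam * f ℓ / 2 with hc
  have hcpos : 0 < c := by rw [hc]; positivity
  clear_value c
  obtain ⟨δ, hδ0, hδ⟩ := Metric.continuousAt_iff.mp hvc.continuousAt c hcpos
  set a := max 0 (ℓ - δ / 2) with ha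
  have ha0 : 0 ≤ a := le_max_left _ _
  have hal : a < ℓ := by apply max_lt hl; linarith
  have haux : ℓ - δ / 2 ≤ a := le_max_right _ _
  clear_value a
  have hvsmall : ∀ r ∈ Icc a ℓ, v r ≤ -c := by
    intro r hr
    have h1 : dist r ℓ < δ := by
      rw [Real.dist_eq, abs_of_nonpos (by linarith [hr.2] : r - ℓ ≤ 0)]
      linarith [hr.1, haux]
    have h2 := hδ h1
    rw [Real.dist_eq] at h2
    have h3 : v r - v ℓ < c := lt_of_le_of_lt (le_abs_self _) h2
    rw [hvl] at h3
    have : c = lam * f ℓ / 2 := hc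
    linarith
  have hulow : ∀ r ∈ Ico a ℓ, c * (ℓ - r) ≤ u r := by
    intro r hr
    obtain ⟨ξ, hξ, hslope⟩ := exists_hasDerivAt_eq_slope u v hr.2 huc.continuousOn fun x _ => hdu x
    have hξ' : v ξ ≤ -c := hvsmall ξ ⟨hr.1.trans hξ.1.le, hξ.2.le⟩
    rw [hfl] at hslope
    have hlr : 0 < ℓ - r := by linarith [hr.2]
    rw [hslope] at hξ'
    rw [div_le_iff₀ hlr] at hξ'
    nlinarith
  -- hInt1
  have hInt1 : IntervalIntegrable (fun r => (deriv g r) ^ 2) volume 0 ℓ := by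
    -- bounds
    obtain ⟨xU, _, hxU⟩ := isCompact_Icc.exists_isMaxOn (nonempty_Icc.mpr hl.le) huc.continuousOn
    set U := max (u xU) 1 with hUdef
    have hUpos : (0:ℝ) < U := lt_of_lt_of_le zero_lt_one (le_max_right _ _)
    have hUb : ∀ r ∈ Icc (0:ℝ) ℓ, u r ≤ U := fun r hr => le_trans (hxU hr) (le_max_left _ _)
    clear_value U
    obtain ⟨xV, _, hxV⟩ := isCompact_Icc.exists_isMaxOn (nonempty_Icc.mpr hl.le) hvc.abs.continuousOn
    set Mv := |v xV| with hMvdef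
    have hMv : ∀ r ∈ Icc (0:ℝ) ℓ, |v r| ≤ Mv := fun r hr => hxV hr
    clear_value Mv
    -- part A
    have hIA : IntervalIntegrable (fun r => (deriv g r) ^ 2) volume 0 a := by
      apply ContinuousOn.intervalIntegrable
      rw [uIcc_of_le ha0]
      have hEq : EqOn (fun r => (deriv g r) ^ 2) (fun r => (v r * t * u r ^ (t - 1)) ^ 2)
          (Icc 0 a) := by
        intro r hr
        have hur : 0 < u r := hf' r ⟨hr.1, lt_of_le_of_lt hr.2 hal⟩
        simp only
        rw [(hderivg r hur.ne').deriv]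
      apply ContinuousOn.congr ?_ hEq
      apply ContinuousOn.pow
      apply ContinuousOn.mul (hvc.continuousOn.mul continuousOn_const)
      exact huc.continuousOn.rpow_const fun r hr =>
        Or.inl (hf' r ⟨hr.1, lt_of_le_of_lt hr.2 hal⟩).ne'
    -- part B
    have hIB : IntervalIntegrable (fun r => (deriv g r) ^ 2) volume a ℓ := by
      rw [intervalIntegrable_iff_integrableOn_Ioc_of_le hal.le,
        integrableOn_Ioc_iff_integrableOn_Ioo]
      have hb1 : IntervalIntegrable (fun r => (ℓ - r) ^ (2 * t - 2)) volume a ℓ := by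
        have h0 := (intervalIntegrable_rpow' (a := 0) (b := ℓ - a) (r := 2 * t - 2)
          (by linarith)).comp_sub_left ℓ
        rw [sub_zero, sub_sub_cancel] at h0
        exact h0.symm
      have hb : IntervalIntegrable
          (fun r => t ^ 2 * Mv ^ 2 * (c ^ (2 * t - 2) * (ℓ - r) ^ (2 * t - 2) + U ^ (2 * t - 2)))
          volume a ℓ := ((hb1.const_mul _).add intervalIntegrable_const).const_mul _
      have hbI : IntegrableOn
          (fun r => t ^ 2 * Mv ^ 2 * (c ^ (2 * t - 2) * (ℓ - r) ^ (2 * t - 2) + U ^ (2 * t - 2)))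
          (Ioo a ℓ) volume :=
        ((intervalIntegrable_iff_integrableOn_Ioc_of_le hal.le).mp hb).mono_set Ioo_subset_Ioc_self
      apply MeasureTheory.Integrable.mono' hbI
        (((measurable_deriv g).pow_const 2).aestronglyMeasurable.restrict)
      rw [MeasureTheory.ae_restrict_iff' measurableSet_Ioo]
      refine MeasureTheory.ae_of_all _ fun r hr => ?_
      obtain ⟨hra, hrl⟩ := hr
      have hur : 0 < u r := hf' r ⟨le_trans ha0 hra.le, hrl⟩
      rw [(hderivg r hur.ne').deriv, Real.norm_eq_abs, abs_of_nonneg (sq_nonneg _)]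
      have hexp : (u r ^ (t - 1)) ^ 2 = u r ^ (2 * t - 2) := by
        rw [sq, ← Real.rpow_add hur]
        congr 1; ring
      have hvb : v r ^ 2 ≤ Mv ^ 2 := by
        have h := hMv r ⟨le_trans ha0 hra.le, hrl.le⟩
        nlinarith [abs_nonneg (v r), sq_abs (v r)]
      have hub : u r ^ (2 * t - 2) ≤ c ^ (2 * t - 2) * (ℓ - r) ^ (2 * t - 2) + U ^ (2 * t - 2) := by
        rcases le_or_gt (2 * t - 2) 0 with hcase | hcase
        · have h1 : c * (ℓ - r) ≤ u r := hulow r ⟨hra.le, hrl⟩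
          have h2 : 0 < c * (ℓ - r) := mul_pos hcpos (by linarith)
          have h3 := Real.rpow_le_rpow_of_nonpos h2 h1 hcase
          rw [Real.mul_rpow hcpos.le (by linarith : (0:ℝ) ≤ ℓ - r)] at h3
          have h4 := Real.rpow_nonneg hUpos.le (2 * t - 2)
          linarith
        · have h1 := Real.rpow_le_rpow hur.le (hUb r ⟨le_trans ha0 hra.le, hrl.le⟩) hcase.le
          have h2 : (0:ℝ) ≤ c ^ (2 * t - 2) * (ℓ - r) ^ (2 * t - 2) :=
            mul_nonneg (Real.rpow_nonneg hcpos.le _) (Real.rpow_nonneg (by linarith) _)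
          linarith
      have expand : (v r * t * u r ^ (t - 1)) ^ 2 = v r ^ 2 * t ^ 2 * (u r ^ (t - 1)) ^ 2 := by ring
      rw [expand, hexp]
      have h5 : 0 ≤ u r ^ (2 * t - 2) := Real.rpow_nonneg hur.le _
      have key : v r ^ 2 * u r ^ (2 * t - 2)
          ≤ Mv ^ 2 * (c ^ (2 * t - 2) * (ℓ - r) ^ (2 * t - 2) + U ^ (2 * t - 2)) := by
        nlinarith [h5, hvb, hub, sq_nonneg (v r)]
      calc v r ^ 2 * t ^ 2 * u r ^ (2 * t - 2) = t ^ 2 * (v r ^ 2 * u r ^ (2 * t - 2)) := by ring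
        _ ≤ t ^ 2 * (Mv ^ 2 * (c ^ (2 * t - 2) * (ℓ - r) ^ (2 * t - 2) + U ^ (2 * t - 2))) :=
          mul_le_mul_of_nonneg_left key (sq_nonneg t)
        _ = t ^ 2 * Mv ^ 2 * (c ^ (2 * t - 2) * (ℓ - r) ^ (2 * t - 2) + U ^ (2 * t - 2)) := by ring
    exact hIA.trans hIB
  have hts : 2 * t * s = 2 * t - 1 := by linear_combination -htkey
  have h4s : 4 * s * (1 - s) * t ^ 2 = 2 * t - 1 := by
    linear_combination (2 * t * s) * htkey + hts
  -- derivative of F on Ioo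
  have hF'eq : ∀ r ∈ Ioo (0:ℝ) ℓ, deriv F r * u r = -(lam * u r + w r + F r * v r) := by
    intro r hr
    have hFd : DifferentiableAt ℝ F r :=
      (hF1.differentiableOn one_ne_zero).differentiableAt (isOpen_Ioo.mem_nhds hr)
    have h1 : HasDerivAt (fun x => v x + F x * u x) (w r + (deriv F r * u r + F r * v r)) r :=
      (hdv r).add (hFd.hasDerivAt.mul (hdu r))
    have h2 : HasDerivAt (fun x => -lam * f x) (-lam * u r) r := (hdf r).const_mul (-lam)
    have h3 : (fun x => v x + F x * u x) =ᶠ[nhds r] fun x => -lam * f x :=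
      Filter.eventuallyEq_of_mem (Filter.mem_of_superset (isOpen_Ioo.mem_nhds hr) Ioo_subset_Icc_self)
        fun x hx => hode x hx
    have h4 := h2.congr_of_eventuallyEq h3
    have h5 := h1.unique h4
    have hox := hode r (Ioo_subset_Icc_self hr)
    linarith
  -- integrability of second integrand
  have hInt2 : IntervalIntegrable (fun r => (lam + s * deriv F r) * (g r) ^ 2) volume 0 ℓ := by
    have hCc : ContinuousOn
        (fun r => lam * (u r ^ t) ^ 2 - s * ((lam * u r + w r + F r * v r) * u r ^ (2 * t - 1)))
        (Icc 0 ℓ) := by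
      apply ContinuousOn.sub
      · exact continuousOn_const.mul
          ((huc.continuousOn.rpow_const fun x _ => Or.inr ht0.le).pow 2)
      · apply continuousOn_const.mul
        apply ContinuousOn.mul
        · exact ((continuousOn_const.mul huc.continuousOn).add hwc.continuousOn).add
            (hFc.mul hvc.continuousOn)
        · exact huc.continuousOn.rpow_const fun x _ => Or.inr (by linarith)
    rw [intervalIntegrable_iff_integrableOn_Ioc_of_le hl.le,
      integrableOn_Ioc_iff_integrableOn_Ioo]
    apply IntegrableOn.congr_fun (hCc.integrableOn_Icc.mono_set Ioo_subset_Icc_self) ?_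
      measurableSet_Ioo
    intro r hr
    have hur : 0 < u r := hf' r ⟨hr.1.le, hr.2⟩
    have hFe := hF'eq r hr
    simp only [hg]
    have e1 : (u r ^ t) ^ 2 = u r ^ (2 * t - 1) * u r := by
      have h1 := Real.rpow_add hur t t
      have h2 := Real.rpow_add hur (2 * t - 1) 1
      rw [Real.rpow_one] at h2
      rw [sq, ← h1, ← h2]
      congr 1; ring
    rw [e1]
    linear_combination (-(s * u r ^ (2 * t - 1))) * hFe
  -- the function Φ
  set Φ : ℝ → ℝ := fun r => (-lam) * f r * u r ^ (2 * t - 1) - s * F r * u r ^ (2 * t) with hΦ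
  have hΦc : ContinuousOn Φ (Icc 0 ℓ) := by
    rw [hΦ]
    apply ContinuousOn.sub
    · exact (continuousOn_const.mul hfc.continuousOn).mul
        (huc.continuousOn.rpow_const fun x _ => Or.inr (by linarith))
    · exact (continuousOn_const.mul hFc).mul
        (huc.continuousOn.rpow_const fun x _ => Or.inr (by linarith))
  have hΦ0 : Φ 0 = 0 := by rw [hΦ]; simp [hf0, hF0]
  have hΦl : Φ ℓ = 0 := by
    rw [hΦ]
    simp only [hfl]
    rw [Real.zero_rpow (by linarith : 2 * t - 1 ≠ 0), Real.zero_rpow (by linarith : 2 * t ≠ 0)]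
    ring
  have hΦd : ∀ r ∈ Ioo (0:ℝ) ℓ, HasDerivAt Φ
      (4 * s * (1 - s) * (deriv g r) ^ 2 - (lam + s * deriv F r) * (g r) ^ 2) r := by
    intro r hr
    have hur : 0 < u r := hf' r ⟨hr.1.le, hr.2⟩
    have hFd : DifferentiableAt ℝ F r :=
      (hF1.differentiableOn one_ne_zero).differentiableAt (isOpen_Ioo.mem_nhds hr)
    have hD : HasDerivAt Φ
        (((-lam) * u r * u r ^ (2 * t - 1)
            + (-lam) * f r * (v r * (2 * t - 1) * u r ^ (2 * t - 1 - 1)))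
          - (s * deriv F r * u r ^ (2 * t) + s * F r * (v r * (2 * t) * u r ^ (2 * t - 1)))) r := by
      rw [hΦ]
      exact (((hdf r).const_mul (-lam)).mul
          ((hdu r).rpow_const (p := 2 * t - 1) (Or.inl hur.ne'))).sub
        ((hFd.hasDerivAt.const_mul s).mul ((hdu r).rpow_const (p := 2 * t) (Or.inl hur.ne')))
    convert hD using 1
    rw [(hderivg r hur.ne').deriv]
    simp only [hg]
    have key : ∀ q1 q2 : ℝ, u r ^ (q1 + q2) = u r ^ q1 * u r ^ q2 := fun q1 q2 =>
      Real.rpow_add hur q1 q2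
    have ea : u r ^ t = u r ^ (t - 1) * u r := by
      conv_lhs => rw [show t = t - 1 + 1 by ring, key, Real.rpow_one]
    have eb : u r ^ (2 * t - 1) = u r ^ (t - 1) * u r ^ (t - 1) * u r := by
      rw [show (2 * t - 1 : ℝ) = (t - 1) + ((t - 1) + 1) by ring, key, key, Real.rpow_one]
      ring
    have ec : u r ^ (2 * t - 1 - 1) = u r ^ (t - 1) * u r ^ (t - 1) := by
      rw [show (2 * t - 1 - 1 : ℝ) = (t - 1) + (t - 1) by ring, key]
    have ed : u r ^ (2 * t) = u r ^ (t - 1) * u r ^ (t - 1) * u r * u r := by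
      rw [show (2 * t : ℝ) = (t - 1) + ((t - 1) + (1 + 1)) by ring, key, key, key, Real.rpow_one]
      ring
    rw [eb, ec, ed, ea]
    have hvr : v r = -(lam * f r) - F r * u r := by
      have h := hode r (Ioo_subset_Icc_self hr)
      linarith [h]
    linear_combination (u r ^ (t - 1)) ^ 2 * (v r) ^ 2 * h4s
      + (u r ^ (t - 1)) ^ 2 * v r * (F r * u r) * hts
      + (2 * t - 1) * (u r ^ (t - 1)) ^ 2 * v r * hvr
  -- FTC
  have hEint : IntervalIntegrable
      (fun r => 4 * s * (1 - s) * (deriv g r) ^ 2 - (lam + s * deriv F r) * (g r) ^ 2)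
      volume 0 ℓ := (hInt1.const_mul _).sub hInt2
  have hzero := integral_eq_sub_of_hasDerivAt_of_le hl.le hΦc hΦd hEint
  rw [hΦl, hΦ0, sub_zero] at hzero
  rw [intervalIntegral.integral_sub (hInt1.const_mul _) hInt2,
    intervalIntegral.integral_const_mul] at hzero
  exact ⟨by linarith, hdg0, hgl⟩



open Real Set

theorem stmt11 (ℓ lam : ℝ) (hl : 0 < ℓ) (F f : ℝ → ℝ)
    (hFc : ContinuousOn F (Set.Icc 0 ℓ)) (hF1 : ContDiffOn ℝ 1 F (Set.Ioo 0 ℓ))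
    (hF0 : F 0 = 0)
    (hf : ContDiff ℝ 3 f)
    (hode : ∀ r ∈ Set.Icc (0:ℝ) ℓ, deriv (deriv f) r + F r * deriv f r = -lam * f r)
    (hf0 : f 0 = 0) (hfl : deriv f ℓ = 0)
    (hf' : ∀ r ∈ Set.Ico (0:ℝ) ℓ, 0 < deriv f r)
    (s : ℝ) (hs : s ∈ Set.Ioo (0:ℝ) 1)
    (g : ℝ → ℝ) (hg : ∀ r, g r = deriv f r ^ (1 / (2 * (1 - s)))) :
    4 * s * (1 - s) * (∫ r in (0:ℝ)..ℓ, (deriv g r) ^ 2)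
        = (∫ r in (0:ℝ)..ℓ, (lam + s * deriv F r) * (g r) ^ 2) ∧
      deriv g 0 = 0 ∧ g ℓ = 0 := by
  have h3 := (contDiff_succ_iff_deriv (n := 2)).mp (by norm_num; exact hf)
  have hc2 : ContDiff ℝ 2 (deriv f) := h3.2.2
  have h2 := (contDiff_succ_iff_deriv (n := 1)).mp (by norm_num; exact hc2)
  have hc1 : ContDiff ℝ 1 (deriv (deriv f)) := h2.2.2
  have h1 := (contDiff_succ_iff_deriv (n := 0)).mp (by norm_num; exact hc1)
  exact aux ℓ lam hl F f (deriv f) (deriv (deriv f)) (deriv (deriv (deriv f))) s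
    (1 / (2 * (1 - s))) hs.1 hs.2 rfl hFc hF1 hF0
    (fun x => (h3.1 x).hasDerivAt) (fun x => (h2.1 x).hasDerivAt) (fun x => (h1.1 x).hasDerivAt)
    h1.1.continuous (contDiff_zero.mp h1.2.2) hode hf0 hfl hf' g (funext hg)
end
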